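/- For the ℂ××ℂ× action (λ,μ)·(x₀,x₁,y₀,y₁) = (λx₀, λx₁, μy₀, μλ^{-n}y₁) on ℂ⁴ with moment map μ(x,y) = -(1/2)(‖x‖² - n|y₁|² - c₀, ‖y‖² - c₁) for c₀, c₁ > 0, the sets of stable and semistable points coincide and equal (ℂ²∖{0}) × (ℂ²∖{0}). -/

import Mathlib

/-!
STATEMENT 10: For the `ℂ× × ℂ×`-action
`(λ,μ)·(x₀,x₁,y₀,y₁) = (λx₀, λx₁, μy₀, μλ^{-n}y₁)` on `ℂ⁴` with moment map
`μ(x,y) = -(1/2)(‖x‖² - n|y₁|² - c₀, ‖y‖² - c₁)`, `c₀, c₁ > 0`, the sets of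
stable and semistable points (defined via the Hilbert–Mumford criterion on
μ-weights, the weight of `(v, ξ)` being the limit of
`t ↦ ⟨μ(exp(√-1 t ξ) v), ξ⟩` as `t → ∞`, computed here as a `limsup` in
`EReal`; `ξ = (a,b)` acts by `√-1 diag(a,a,b,b-na)`, so `exp(√-1 t ξ)` scales
the coordinates by `e^{-at}, e^{-at}, e^{-bt}, e^{-(b-na)t}`) coincide and
equal `(ℂ²∖{0}) × (ℂ²∖{0})`.
-/

open Filter

namespace Stmt10

variable (n : ℕ) (c₀ c₁ : ℝ)

/-- `⟨μ(exp(√-1 t ξ) v), ξ⟩` for `ξ = (a, b)` and `v = (x₀, x₁, y₀, y₁)`. -/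
noncomputable def momentAlongFlow (ξ : ℝ × ℝ) (v : ℂ × ℂ × ℂ × ℂ) (t : ℝ) : ℝ :=
  -(1/2 : ℝ) *
    (ξ.1 * (Real.exp (-ξ.1 * t) ^ 2 * (‖v.1‖ ^ 2 + ‖v.2.1‖ ^ 2)
          - n * Real.exp (-(ξ.2 - n * ξ.1) * t) ^ 2 * ‖v.2.2.2‖ ^ 2 - c₀)
    + ξ.2 * (Real.exp (-ξ.2 * t) ^ 2 * ‖v.2.2.1‖ ^ 2
          + Real.exp (-(ξ.2 - n * ξ.1) * t) ^ 2 * ‖v.2.2.2‖ ^ 2 - c₁))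

/-- The μ-weight `w_μ^ξ(v)`, as an extended real number. -/
noncomputable def weight (ξ : ℝ × ℝ) (v : ℂ × ℂ × ℂ × ℂ) : EReal :=
  Filter.limsup (fun t : ℝ => ((momentAlongFlow n c₀ c₁ ξ v t : ℝ) : EReal)) atTop

/-- Hilbert–Mumford: `v` is stable iff all μ-weights at nonzero `ξ` are positive. -/
noncomputable def IsStable (v : ℂ × ℂ × ℂ × ℂ) : Prop :=
  ∀ ξ : ℝ × ℝ, ξ ≠ 0 → 0 < weight n c₀ c₁ ξ v

/-- Hilbert–Mumford: `v` is semistable iff all μ-weights at nonzero `ξ` are nonnegative. -/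
noncomputable def IsSemistable (v : ℂ × ℂ × ℂ × ℂ) : Prop :=
  ∀ ξ : ℝ × ℝ, ξ ≠ 0 → 0 ≤ weight n c₀ c₁ ξ v

end Stmt10

namespace Stmt10Aux

open Real

lemma exp_sq_zero {s : ℝ} (hs : 0 < s) :
    Tendsto (fun t : ℝ => Real.exp (-s*t)^2) atTop (nhds 0) := by
  have h1 : Tendsto (fun t : ℝ => -s*t) atTop atBot := by
    have h0 := (tendsto_const_mul_atTop_of_pos hs).2 (tendsto_id (α := ℝ))
    have h := tendsto_neg_atTop_atBot.comp h0
    exact h.congr (fun t => by simp [Function.comp, neg_mul])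
  simpa using (Real.tendsto_exp_atBot.comp h1).pow 2

lemma exp_sq_top {s : ℝ} (hs : s < 0) :
    Tendsto (fun t : ℝ => Real.exp (-s*t)^2) atTop atTop := by
  have h1 : Tendsto (fun t : ℝ => -s*t) atTop atTop :=
    (tendsto_const_mul_atTop_of_pos (by linarith)).2 (tendsto_id (α := ℝ))
  exact (tendsto_pow_atTop (two_ne_zero)).comp (Real.tendsto_exp_atTop.comp h1)

/-- a single exponential term tends to 0 when exponent nonneg or coefficient zero -/
lemma term_zero (s K : ℝ) (h : 0 ≤ s ∨ K = 0) :
    Tendsto (fun t : ℝ => s * K * Real.exp (-s*t)^2) atTop (nhds 0) := by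
  rcases h with hs | hK
  · rcases hs.eq_or_lt with h0 | h0
    · simp [← h0]
    · simpa using (exp_sq_zero h0).const_mul (s * K)
  · simp [hK]

/-- lower bound for `-(1/2)` times a term, valid for `t ≥ 0`. -/
lemma term_lower (s K : ℝ) (hK : 0 ≤ K) {t : ℝ} (ht : 0 ≤ t) :
    -(1/2) * (|s| * K) ≤ -(1/2) * (s * K * Real.exp (-s*t)^2) := by
  rcases le_or_gt s 0 with hs | hs
  · have h1 : s * K * Real.exp (-s*t)^2 ≤ 0 :=
      mul_nonpos_of_nonpos_of_nonneg (mul_nonpos_of_nonpos_of_nonneg hs hK) (sq_nonneg _)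
    have h2 : 0 ≤ |s| * K := mul_nonneg (abs_nonneg s) hK
    nlinarith
  · have he : Real.exp (-s*t) ≤ 1 := Real.exp_le_one_iff.2 (by nlinarith)
    have he0 : 0 ≤ Real.exp (-s*t) := (Real.exp_pos _).le
    have h1 : Real.exp (-s*t)^2 ≤ 1 := by nlinarith
    have h2 : s * K * Real.exp (-s*t)^2 ≤ s * K := by nlinarith [mul_nonneg (mul_nonneg hs.le hK) (sub_nonneg.2 h1)]
    rw [abs_of_pos hs]; nlinarith

lemma term_top {s K : ℝ} (hs : s < 0) (hK : 0 < K) :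
    Tendsto (fun t : ℝ => -(1/2) * (s * K * Real.exp (-s*t)^2)) atTop atTop := by
  have h := (exp_sq_top hs).const_mul_atTop (by nlinarith : (0:ℝ) < -(1/2) * (s * K))
  exact h.congr (fun t => by ring)



open Stmt10

variable {n : ℕ} {c₀ c₁ : ℝ} {ξ : ℝ × ℝ} {v : ℂ × ℂ × ℂ × ℂ}

/-- Abbreviations. -/
noncomputable def A (v : ℂ × ℂ × ℂ × ℂ) : ℝ := ‖v.1‖ ^ 2 + ‖v.2.1‖ ^ 2
noncomputable def B (v : ℂ × ℂ × ℂ × ℂ) : ℝ := ‖v.2.2.1‖ ^ 2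
noncomputable def C (v : ℂ × ℂ × ℂ × ℂ) : ℝ := ‖v.2.2.2‖ ^ 2
noncomputable def d (n : ℕ) (ξ : ℝ × ℝ) : ℝ := ξ.2 - n * ξ.1

lemma moment_eq (n : ℕ) (c₀ c₁ : ℝ) (ξ : ℝ × ℝ) (v : ℂ × ℂ × ℂ × ℂ) (t : ℝ) :
    momentAlongFlow n c₀ c₁ ξ v t
      = (ξ.1*c₀+ξ.2*c₁)/2
        + -(1/2) * (ξ.1 * A v * Real.exp (-ξ.1*t)^2)
        + -(1/2) * (ξ.2 * B v * Real.exp (-ξ.2*t)^2)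
        + -(1/2) * (d n ξ * C v * Real.exp (-(d n ξ)*t)^2) := by
  unfold momentAlongFlow A B C d
  ring

lemma tendsto_moment_nhds
    (h1 : 0 ≤ ξ.1 ∨ A v = 0) (h2 : 0 ≤ ξ.2 ∨ B v = 0) (h3 : 0 ≤ d n ξ ∨ C v = 0) :
    Tendsto (momentAlongFlow n c₀ c₁ ξ v) atTop (nhds ((ξ.1*c₀+ξ.2*c₁)/2)) := by
  have t1 := (term_zero ξ.1 (A v) h1).const_mul (-(1/2 : ℝ))
  have t2 := (term_zero ξ.2 (B v) h2).const_mul (-(1/2 : ℝ))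
  have t3 := (term_zero (d n ξ) (C v) h3).const_mul (-(1/2 : ℝ))
  have h := (((t1.add t2).add t3).const_add ((ξ.1*c₀+ξ.2*c₁)/2))
  simp only [mul_zero, add_zero] at h
  exact h.congr fun t => by rw [moment_eq]; ring

lemma weight_eq_of
    (h1 : 0 ≤ ξ.1 ∨ A v = 0) (h2 : 0 ≤ ξ.2 ∨ B v = 0) (h3 : 0 ≤ d n ξ ∨ C v = 0) :
    weight n c₀ c₁ ξ v = (((ξ.1*c₀+ξ.2*c₁)/2 : ℝ) : EReal) :=
  (EReal.tendsto_coe.2 (tendsto_moment_nhds h1 h2 h3)).limsup_eq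

lemma tendsto_moment_atTop
    (hbad : (ξ.1 < 0 ∧ 0 < A v) ∨ (ξ.2 < 0 ∧ 0 < B v) ∨ (d n ξ < 0 ∧ 0 < C v)) :
    Tendsto (momentAlongFlow n c₀ c₁ ξ v) atTop atTop := by
  have hA : 0 ≤ A v := by unfold A; positivity
  have hB : 0 ≤ B v := sq_nonneg _
  have hC : 0 ≤ C v := sq_nonneg _
  rcases hbad with ⟨hs, hK⟩ | ⟨hs, hK⟩ | ⟨hs, hK⟩
  · refine tendsto_atTop_mono' atTop ?_
      (tendsto_atTop_add_const_left _ ((ξ.1*c₀+ξ.2*c₁)/2 + -(1/2)*(|ξ.2| * B v) + -(1/2)*(|d n ξ| * C v))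
        (term_top hs hK))
    filter_upwards [eventually_ge_atTop (0:ℝ)] with t ht
    have l2 := term_lower ξ.2 (B v) hB ht
    have l3 := term_lower (d n ξ) (C v) hC ht
    rw [moment_eq]; linarith
  · refine tendsto_atTop_mono' atTop ?_
      (tendsto_atTop_add_const_left _ ((ξ.1*c₀+ξ.2*c₁)/2 + -(1/2)*(|ξ.1| * A v) + -(1/2)*(|d n ξ| * C v))
        (term_top hs hK))
    filter_upwards [eventually_ge_atTop (0:ℝ)] with t ht
    have l1 := term_lower ξ.1 (A v) hA ht
    have l3 := term_lower (d n ξ) (C v) hC ht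
    rw [moment_eq]; linarith
  · refine tendsto_atTop_mono' atTop ?_
      (tendsto_atTop_add_const_left _ ((ξ.1*c₀+ξ.2*c₁)/2 + -(1/2)*(|ξ.1| * A v) + -(1/2)*(|ξ.2| * B v))
        (term_top hs hK))
    filter_upwards [eventually_ge_atTop (0:ℝ)] with t ht
    have l1 := term_lower ξ.1 (A v) hA ht
    have l2 := term_lower ξ.2 (B v) hB ht
    rw [moment_eq]; linarith

lemma weight_pos_of_bad
    (hbad : (ξ.1 < 0 ∧ 0 < A v) ∨ (ξ.2 < 0 ∧ 0 < B v) ∨ (d n ξ < 0 ∧ 0 < C v)) :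
    0 < weight n c₀ c₁ ξ v := by
  have h := tendsto_moment_atTop (c₀ := c₀) (c₁ := c₁) hbad
  refine lt_of_lt_of_le (by norm_num : (0:EReal) < 1) (le_limsup_of_frequently_le ?_)
  exact ((h.eventually_ge_atTop 1).mono fun t ht => by exact_mod_cast ht).frequently

end Stmt10Aux

theorem statement10 (n : ℕ) (hn : 0 < n) (c₀ c₁ : ℝ) (hc₀ : 0 < c₀) (hc₁ : 0 < c₁) :
    { v | Stmt10.IsStable n c₀ c₁ v } = { v | Stmt10.IsSemistable n c₀ c₁ v }
    ∧ { v | Stmt10.IsStable n c₀ c₁ v }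
      = { v : ℂ × ℂ × ℂ × ℂ | ¬ (v.1 = 0 ∧ v.2.1 = 0) ∧ ¬ (v.2.2.1 = 0 ∧ v.2.2.2 = 0) } := by
  classical
  open Stmt10Aux in
  -- target ⊆ stable
  have htarget : ∀ v : ℂ × ℂ × ℂ × ℂ, ¬ (v.1 = 0 ∧ v.2.1 = 0) → ¬ (v.2.2.1 = 0 ∧ v.2.2.2 = 0) →
      Stmt10.IsStable n c₀ c₁ v := by
    intro v hx hy ξ hξ
    have hA : 0 < A v := by
      rcases not_and_or.mp hx with h | h
      · have := norm_pos_iff.mpr h; unfold A; positivity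
      · have := norm_pos_iff.mpr h; unfold A; positivity
    have hBC : 0 < B v ∨ 0 < C v := by
      rcases not_and_or.mp hy with h | h
      · exact Or.inl (by have := norm_pos_iff.mpr h; unfold B; positivity)
      · exact Or.inr (by have := norm_pos_iff.mpr h; unfold C; positivity)
    by_cases hbad : (ξ.1 < 0 ∧ 0 < A v) ∨ (ξ.2 < 0 ∧ 0 < B v) ∨ (d n ξ < 0 ∧ 0 < C v)
    · exact weight_pos_of_bad hbad
    · push_neg at hbad
      obtain ⟨h1, h2, h3⟩ := hbad
      have ha : 0 ≤ ξ.1 := by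
        by_contra h
        exact absurd hA (not_lt.2 (h1 (not_le.1 h)))
      have hb : 0 ≤ ξ.2 := by
        by_contra h
        have hb' := not_le.1 h
        have hBz : B v ≤ 0 := h2 hb'
        have hd : d n ξ < 0 := by
          unfold d
          have hna : (0:ℝ) ≤ (n:ℝ) * ξ.1 := by positivity
          linarith
        have hCz : C v ≤ 0 := h3 hd
        rcases hBC with h' | h' <;> linarith
      have hcond3 : 0 ≤ d n ξ ∨ C v = 0 := by
        rcases lt_or_ge (d n ξ) 0 with h5 | h5
        · exact Or.inr (le_antisymm (h3 h5) (sq_nonneg _))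
        · exact Or.inl h5
      rw [weight_eq_of (Or.inl ha) (Or.inl hb) hcond3]
      have hne : ξ.1 ≠ 0 ∨ ξ.2 ≠ 0 := by
        by_contra h; push_neg at h
        exact hξ (Prod.ext h.1 h.2)
      have hsum : 0 < (ξ.1*c₀+ξ.2*c₁)/2 := by
        rcases hne with h | h
        · have : 0 < ξ.1 := lt_of_le_of_ne ha (Ne.symm h)
          nlinarith
        · have : 0 < ξ.2 := lt_of_le_of_ne hb (Ne.symm h)
          nlinarith
      exact_mod_cast EReal.coe_pos.2 hsum
  -- semistable ⊆ target
  have hsemi : ∀ v : ℂ × ℂ × ℂ × ℂ, Stmt10.IsSemistable n c₀ c₁ v →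
      ¬ (v.1 = 0 ∧ v.2.1 = 0) ∧ ¬ (v.2.2.1 = 0 ∧ v.2.2.2 = 0) := by
    intro v hv
    constructor
    · rintro ⟨hx0, hx1⟩
      have hne : ((-1, 0) : ℝ × ℝ) ≠ 0 := by
        simp [Prod.ext_iff]
      have hw := hv (-1, 0) hne
      have hAz : A v = 0 := by unfold A; rw [hx0, hx1]; simp
      have hd : 0 ≤ d n ((-1, 0) : ℝ × ℝ) := by
        unfold d; simp
      rw [weight_eq_of (Or.inr hAz) (Or.inl (by norm_num)) (Or.inl hd)] at hw
      have : (0:ℝ) ≤ ((-1)*c₀+0*c₁)/2 := by exact_mod_cast EReal.coe_nonneg.1 hw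
      linarith
    · rintro ⟨hy0, hy1⟩
      have hne : ((0, -1) : ℝ × ℝ) ≠ 0 := by
        simp [Prod.ext_iff]
      have hw := hv (0, -1) hne
      have hBz : B v = 0 := by unfold B; rw [hy0]; simp
      have hCz : C v = 0 := by unfold C; rw [hy1]; simp
      rw [weight_eq_of (Or.inl (by norm_num)) (Or.inr hBz) (Or.inr hCz)] at hw
      have : (0:ℝ) ≤ (0*c₀+(-1)*c₁)/2 := by exact_mod_cast EReal.coe_nonneg.1 hw
      linarith
  have hss : ∀ v : ℂ × ℂ × ℂ × ℂ, Stmt10.IsStable n c₀ c₁ v → Stmt10.IsSemistable n c₀ c₁ v :=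
    fun v h ξ hξ => (h ξ hξ).le
  constructor
  · ext v
    exact ⟨fun h => hss v h, fun h => htarget v (hsemi v h).1 (hsemi v h).2⟩
  · ext v
    exact ⟨fun h => hsemi v (hss v h), fun h => htarget v h.1 h.2⟩
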